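/- There exists a constant C₂ > 0, depending only on the prime power q, such that for all integers m ≥ n ≥ 1, every real μ > 0, every integer N ≥ 2 with N ≥ q^{m+n}·μ, and every integer i with (m+n)/2 − √((m−n)²/4 + log_q N − (m+n) − log_q μ) ≤ i ≤ n, the quantity p_i = (1 − B_{i−1}/q^{mn})^N − (1 − B_i/q^{mn})^N satisfies p_i ≤ e^{−C₂·μ}. -/

import Mathlib

open Matrix Finset Real

set_option maxHeartbeats 1000000

/-- Number of `m × n` matrices over `F` of rank at most `t`. -/
noncomputable def ballCount (F : Type*) [Field F] [Fintype F] (m n t : ℕ) : ℕ :=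
  Nat.card {A : Matrix (Fin m) (Fin n) F // A.rank ≤ t}

section aux

variable {F : Type*} [Field F] [Fintype F]

omit [Field F] in
lemma card_matrix_fin (a b : ℕ) :
    Nat.card (Matrix (Fin a) (Fin b) F) = (Fintype.card F) ^ (a * b) := by
  rw [Nat.card_eq_fintype_card, Fintype.card_congr (Matrix.of (m := Fin a) (n := Fin b) (α := F)).symm,
    Fintype.card_fun, Fintype.card_fun]
  simp [← pow_mul, mul_comm]

lemma ballCount_le_total (m n t : ℕ) :
    ballCount F m n t ≤ (Fintype.card F) ^ (m * n) := by
  rw [← card_matrix_fin (F := F) m n, ballCount]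
  exact Nat.card_le_card_of_injective _ Subtype.val_injective

lemma ballCount_lower (m n t : ℕ) (htn : t ≤ n) (htm : t ≤ m) :
    (∏ j : Fin t, ((Fintype.card F) ^ t - (Fintype.card F) ^ (j : ℕ))) *
      ((Fintype.card F) ^ (t * (n - t)) * (Fintype.card F) ^ ((m - t) * t))
      ≤ ballCount F m n t := by
  classical
  have key : ∀ (A : GL (Fin t) F) (B : Matrix (Fin t) (Fin (n - t)) F)
      (C : Matrix (Fin (m - t)) (Fin t) F),
      fromRows (1 : Matrix (Fin t) (Fin t) F) (C * ((A⁻¹ : GL (Fin t) F) : Matrix (Fin t) (Fin t) F)) *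
        fromCols ((A : GL (Fin t) F) : Matrix (Fin t) (Fin t) F) B =
      fromBlocks ((A : GL (Fin t) F) : Matrix (Fin t) (Fin t) F) B C
        (C * ((A⁻¹ : GL (Fin t) F) : Matrix (Fin t) (Fin t) F) * B) := by
    intro A B C
    have h1 : ((A⁻¹ : GL (Fin t) F) : Matrix (Fin t) (Fin t) F) * (A : Matrix (Fin t) (Fin t) F) = 1 := by
      exact_mod_cast Units.inv_mul A
    have h2 : ((A : Matrix (Fin t) (Fin t) F))⁻¹ * (A : Matrix (Fin t) (Fin t) F) = 1 := by
      rw [← Matrix.coe_units_inv]; exact h1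
    rw [fromRows_mul_fromCols]
    simp [Matrix.mul_assoc, h1, h2]
  let e₁ : Fin m ≃ (Fin t ⊕ Fin (m - t)) := (finCongr (by omega : m = t + (m - t))).trans finSumFinEquiv.symm
  let e₂ : Fin n ≃ (Fin t ⊕ Fin (n - t)) := (finCongr (by omega : n = t + (n - t))).trans finSumFinEquiv.symm
  let Φ : (GL (Fin t) F × Matrix (Fin t) (Fin (n - t)) F × Matrix (Fin (m - t)) (Fin t) F) →
      {A : Matrix (Fin m) (Fin n) F // A.rank ≤ t} := fun x =>
    ⟨(((fromRows (1 : Matrix (Fin t) (Fin t) F) (x.2.2 * ((x.1⁻¹ : GL (Fin t) F) : Matrix (Fin t) (Fin t) F))) *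
        (fromCols ((x.1 : GL (Fin t) F) : Matrix (Fin t) (Fin t) F) x.2.1)).submatrix e₁ e₂), by
      rw [Matrix.submatrix_mul _ _ e₁ id e₂ Function.bijective_id]
      calc ((fromRows 1 (x.2.2 * ((x.1⁻¹ : GL (Fin t) F) : Matrix (Fin t) (Fin t) F))).submatrix e₁ id *
              (fromCols ((x.1 : GL (Fin t) F) : Matrix (Fin t) (Fin t) F) x.2.1).submatrix id e₂).rank
          ≤ ((fromRows 1 (x.2.2 * ((x.1⁻¹ : GL (Fin t) F) : Matrix (Fin t) (Fin t) F))).submatrix e₁ id).rank :=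
            rank_mul_le_left _ _
        _ ≤ Fintype.card (Fin t) := rank_le_card_width _
        _ = t := Fintype.card_fin t⟩
  have hΦ : Function.Injective Φ := by
    rintro ⟨A, B, C⟩ ⟨A', B', C'⟩ h
    have h1 := congrArg (fun M => (Matrix.submatrix (M : Matrix (Fin m) (Fin n) F) e₁.symm e₂.symm)) (Subtype.ext_iff.mp h)
    simp only [Φ, key, submatrix_submatrix, Equiv.self_comp_symm, submatrix_id_id] at h1
    have h11 := congrArg Matrix.toBlocks₁₁ h1
    have h12 := congrArg Matrix.toBlocks₁₂ h1
    have h21 := congrArg Matrix.toBlocks₂₁ h1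
    simp only [toBlocks_fromBlocks₁₁, toBlocks_fromBlocks₁₂, toBlocks_fromBlocks₂₁] at h11 h12 h21
    exact Prod.ext (Units.ext h11) (Prod.ext h12 h21)
  have hcard := Nat.card_le_card_of_injective Φ hΦ
  rw [Nat.card_prod, Nat.card_prod, Matrix.card_GL_field, card_matrix_fin, card_matrix_fin] at hcard
  rw [ballCount]
  exact hcard

end aux

lemma g_bound {r : ℝ} (hr0 : 0 < r) (hr : r ≤ 1/2) (t : ℕ) :
    1/4 + r^t/2 ≤ ∏ k ∈ Finset.range t, (1 - r^(k+1)) := by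
  induction t with
  | zero => norm_num
  | succ u ih =>
    rw [Finset.prod_range_succ]
    rcases Nat.eq_zero_or_pos u with rfl | hu
    · simp only [Finset.range_zero, Finset.prod_empty, one_mul, pow_one]
      nlinarith
    · have h2 : (0:ℝ) < r^u := pow_pos hr0 u
      have h3 : r^(u+1) = r^u * r := pow_succ r u
      have h4 : r^u ≤ r^1 := pow_le_pow_of_le_one hr0.le (by linarith) hu
      have h5 : 0 < 1 - r^(u+1) := by nlinarith
      have key := mul_le_mul_of_nonneg_right ih h5.le
      nlinarith [key, h2, h3, h4, mul_pos h2 hr0]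

lemma prod_pow_sub_bound {q : ℕ} (hq : 2 ≤ q) (t : ℕ) :
    (1/4 : ℝ) * (q:ℝ)^(t*t) ≤ ∏ j ∈ Finset.range t, ((q:ℝ)^t - (q:ℝ)^j) := by
  have hQ2 : (2:ℝ) ≤ (q:ℝ) := by exact_mod_cast hq
  have hQ0 : (0:ℝ) < q := by linarith
  have hr0 : (0:ℝ) < (q:ℝ)⁻¹ := by positivity
  have hr : (q:ℝ)⁻¹ ≤ 1/2 := by
    rw [inv_le_comm₀ hQ0 (by norm_num)]; linarith
  have hfac : ∀ k ∈ Finset.range t, (q:ℝ)^t - (q:ℝ)^(t-1-k) = (q:ℝ)^t * (1 - ((q:ℝ)⁻¹)^(k+1)) := by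
    intro k hk
    rw [Finset.mem_range] at hk
    have hpow : (q:ℝ)^(t-1-k) * (q:ℝ)^(k+1) = (q:ℝ)^t := by
      rw [← pow_add]; congr 1; omega
    rw [mul_sub, mul_one, inv_pow]
    congr 1
    rw [← hpow]
    field_simp
  have hrw : ∏ j ∈ Finset.range t, ((q:ℝ)^t - (q:ℝ)^j)
      = (q:ℝ)^(t*t) * ∏ k ∈ Finset.range t, (1 - ((q:ℝ)⁻¹)^(k+1)) := by
    rw [← Finset.prod_range_reflect (fun j => ((q:ℝ)^t - (q:ℝ)^j)) t]
    rw [Finset.prod_congr rfl hfac, Finset.prod_mul_distrib, Finset.prod_const,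
      Finset.card_range, ← pow_mul]
  rw [hrw]
  have hg := g_bound hr0 hr t
  have hp : (0:ℝ) < (q:ℝ)^(t*t) := by positivity
  nlinarith [hg, hp, pow_pos hr0 t]

lemma exp_split (m n t : ℕ) (htn : t ≤ n) (htm : t ≤ m) :
    t*t + (t*(n-t) + (m-t)*t) = t*(m+n-t) := by
  obtain ⟨a, rfl⟩ : ∃ a, n = t + a := ⟨n - t, by omega⟩
  obtain ⟨b, rfl⟩ : ∃ b, m = t + b := ⟨m - t, by omega⟩
  have h1 : t + a - t = a := by omega
  have h2 : t + b - t = b := by omega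
  have h3 : (t + b) + (t + a) - t = t + b + a := by omega
  rw [h1, h2, h3]
  ring

lemma ballCount_fourth {F : Type*} [Field F] [Fintype F] (m n t : ℕ) (htn : t ≤ n) (htm : t ≤ m) :
    (1/4 : ℝ) * ((Fintype.card F : ℝ))^(t*(m+n-t)) ≤ (ballCount F m n t : ℝ) := by
  have hq2 : 2 ≤ Fintype.card F := Fintype.one_lt_card
  set q := Fintype.card F with hq
  have h1 := ballCount_lower (F := F) m n t htn htm
  have h1R : ((∏ j : Fin t, (q ^ t - q ^ (j:ℕ)) : ℕ) : ℝ) * ((q:ℝ)^(t*(n-t)) * (q:ℝ)^((m-t)*t))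
      ≤ (ballCount F m n t : ℝ) := by exact_mod_cast h1
  have hcast : ((∏ j : Fin t, (q ^ t - q ^ (j:ℕ)) : ℕ) : ℝ)
      = ∏ j ∈ Finset.range t, ((q:ℝ)^t - (q:ℝ)^j) := by
    rw [Nat.cast_prod, Fin.prod_univ_eq_prod_range (fun j => (((q^t - q^j : ℕ)):ℝ)) t]
    apply Finset.prod_congr rfl
    intro j hj
    have hj' := Finset.mem_range.mp hj
    rw [Nat.cast_sub (Nat.pow_le_pow_right (by omega) (by omega))]
    push_cast
    ring
  have hP := prod_pow_sub_bound hq2 t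
  have hpos : (0:ℝ) < (q:ℝ)^(t*(n-t)) * (q:ℝ)^((m-t)*t) := by
    have : (0:ℝ) < (q:ℝ) := by exact_mod_cast (by omega : 0 < q)
    positivity
  have h1R' : (∏ j ∈ Finset.range t, ((q:ℝ)^t - (q:ℝ)^j)) * ((q:ℝ)^(t*(n-t)) * (q:ℝ)^((m-t)*t))
      ≤ (ballCount F m n t : ℝ) := by rw [← hcast]; exact h1R
  have key := le_trans (mul_le_mul_of_nonneg_right hP hpos.le) h1R'
  calc (1/4:ℝ) * (q:ℝ)^(t*(m+n-t))
      = (1/4:ℝ) * (q:ℝ)^(t*t) * ((q:ℝ)^(t*(n-t)) * (q:ℝ)^((m-t)*t)) := by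
        rw [← exp_split m n t htn htm, pow_add, pow_add]
        ring
    _ ≤ _ := key

theorem stmt11 (q : ℕ) (F : Type*) [Field F] [Fintype F] (hq : Fintype.card F = q) :
    ∃ C₂ : ℝ, 0 < C₂ ∧
      ∀ (m n N : ℕ) (μ : ℝ) (i : ℕ),
        1 ≤ n → n ≤ m → 2 ≤ N → 0 < μ →
        (q : ℝ) ^ (m + n) * μ ≤ (N : ℝ) →
        ((m : ℝ) + n) / 2 -
          Real.sqrt (((m : ℝ) - n) ^ 2 / 4 + Real.logb q N - ((m : ℝ) + n) - Real.logb q μ)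
          ≤ (i : ℝ) →
        i ≤ n →
        (1 - (ballCount F m n (i - 1) : ℝ) / (q : ℝ) ^ (m * n)) ^ N -
          (1 - (ballCount F m n i : ℝ) / (q : ℝ) ^ (m * n)) ^ N ≤
        Real.exp (-(C₂ * μ)) := by
  subst hq
  refine ⟨1/2, by norm_num, ?_⟩
  intro m n N μ i hn hnm hN hμ hNμ hi hin
  have hq2 : 2 ≤ Fintype.card F := Fintype.one_lt_card
  set q := Fintype.card F with hqdef
  have hQ2 : (2:ℝ) ≤ (q:ℝ) := by exact_mod_cast hq2
  have hQ0 : (0:ℝ) < q := by linarith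
  have hQ1 : (1:ℝ) < q := by linarith
  have hQmn : (0:ℝ) < (q:ℝ)^(m*n) := by positivity
  have hNpos : (0:ℝ) < N := by positivity
  rcases Nat.eq_zero_or_pos i with rfl | hi1
  · norm_num
    exact (Real.exp_pos _).le
  have hlogb : ((m:ℝ) + n) + Real.logb q μ ≤ Real.logb q N := by
    have h1 : Real.logb q ((q:ℝ)^(m+n) * μ) ≤ Real.logb q N :=
      Real.logb_le_logb_of_le hQ1 (by positivity) hNμ
    rwa [Real.logb_mul (by positivity) hμ.ne', Real.logb_pow,
      Real.logb_self_eq_one hQ1, mul_one, Nat.cast_add] at h1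
  have hD0 : (0:ℝ) ≤ ((m:ℝ) - n) ^ 2 / 4 + Real.logb q N - ((m:ℝ) + n) - Real.logb q μ := by
    nlinarith [sq_nonneg ((m:ℝ) - n)]
  have hinR : (i:ℝ) ≤ n := by exact_mod_cast hin
  have hnmR : (n:ℝ) ≤ m := by exact_mod_cast hnm
  have hi1R : (1:ℝ) ≤ i := by exact_mod_cast hi1
  have h0 : 0 ≤ ((m:ℝ)+n)/2 - i := by linarith
  have h2 : (((m:ℝ)+n)/2 - i)^2 ≤
      ((m:ℝ) - n) ^ 2 / 4 + Real.logb q N - ((m:ℝ) + n) - Real.logb q μ := by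
    calc (((m:ℝ)+n)/2 - i)^2
        ≤ (Real.sqrt (((m:ℝ) - n) ^ 2 / 4 + Real.logb q N - ((m:ℝ) + n) - Real.logb q μ))^2 :=
          pow_le_pow_left₀ h0 (by linarith) 2
      _ = _ := Real.sq_sqrt hD0
  have hiq : (m:ℝ)*n - (Real.logb q N - ((m:ℝ)+n) - Real.logb q μ) ≤ (i:ℝ)*((m:ℝ)+n-i) := by
    nlinarith [h2]
  set t := i - 1 with ht
  have htn : t ≤ n := by omega
  have htm : t ≤ m := by omega
  have htR : (t:ℝ) = (i:ℝ) - 1 := by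
    rw [ht, Nat.cast_sub hi1]; norm_num
  have hE : (m:ℝ)*n + 1 + Real.logb q μ - Real.logb q N ≤ (t:ℝ)*((m:ℝ)+n-t) := by
    rw [htR]; nlinarith [hiq, hi1R]
  have hcast : ((t*(m+n-t) : ℕ) : ℝ) = (t:ℝ)*((m:ℝ)+n-t) := by
    push_cast [Nat.cast_sub (by omega : t ≤ m + n)]
    ring
  have hpow : (q:ℝ)^(m*n+1) * μ / N ≤ (q:ℝ)^(t*(m+n-t)) := by
    have e1 : (q:ℝ) ^ (((m*n+1 : ℕ):ℝ) + Real.logb q μ - Real.logb q N)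
        = (q:ℝ)^(m*n+1) * μ / N := by
      rw [Real.rpow_sub hQ0, Real.rpow_add hQ0, Real.rpow_logb hQ0 (by linarith) hμ,
        Real.rpow_logb hQ0 (by linarith) hNpos, Real.rpow_natCast]
    have hle : ((m*n+1 : ℕ):ℝ) + Real.logb q μ - Real.logb q N ≤ ((t*(m+n-t) : ℕ) : ℝ) := by
      rw [hcast]; push_cast; linarith [hE]
    calc (q:ℝ)^(m*n+1) * μ / N
        = (q:ℝ) ^ (((m*n+1 : ℕ):ℝ) + Real.logb q μ - Real.logb q N) := e1.symm
      _ ≤ (q:ℝ) ^ (((t*(m+n-t) : ℕ)):ℝ) := (Real.rpow_le_rpow_left_iff hQ1).mpr hle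
      _ = (q:ℝ)^(t*(m+n-t)) := Real.rpow_natCast _ _
  have hB : (1/4:ℝ) * (q:ℝ)^(m*n+1) * μ / N ≤ (ballCount F m n t : ℝ) := by
    have hbf := ballCount_fourth (F := F) m n t htn htm
    calc (1/4:ℝ) * (q:ℝ)^(m*n+1) * μ / N
        = (1/4:ℝ) * ((q:ℝ)^(m*n+1) * μ / N) := by ring
      _ ≤ (1/4:ℝ) * (q:ℝ)^(t*(m+n-t)) := mul_le_mul_of_nonneg_left hpow (by norm_num)
      _ ≤ _ := hbf
  set x : ℝ := (ballCount F m n t : ℝ) / (q:ℝ)^(m*n) with hx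
  have hx1 : x ≤ 1 := by
    rw [hx, div_le_one hQmn]
    exact_mod_cast ballCount_le_total (F := F) m n t
  have hxN : μ/2 ≤ N * x := by
    have h1 : (q:ℝ)^(m*n+1) = (q:ℝ)^(m*n) * q := pow_succ _ _
    have h2 : (1/4:ℝ) * ((q:ℝ)^(m*n) * q) * μ / N ≤ (ballCount F m n t : ℝ) := by
      rw [← h1]; exact hB
    have h3 : N * x = N * (ballCount F m n t : ℝ) / (q:ℝ)^(m*n) := by rw [hx]; ring
    rw [h3, le_div_iff₀ hQmn]
    rw [div_le_iff₀ hNpos] at h2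
    have h5 : 0 ≤ (q:ℝ)^(m*n) * μ * ((q:ℝ) - 2) :=
      mul_nonneg (mul_nonneg hQmn.le hμ.le) (by linarith)
    linarith [h2, h5]
  have hb0 : (0:ℝ) ≤ 1 - (ballCount F m n i : ℝ) / (q:ℝ)^(m*n) := by
    rw [sub_nonneg, div_le_one hQmn]
    exact_mod_cast ballCount_le_total (F := F) m n i
  have hx0 : 0 ≤ x := by positivity
  calc (1 - (ballCount F m n t : ℝ) / (q:ℝ)^(m*n)) ^ N -
          (1 - (ballCount F m n i : ℝ) / (q:ℝ)^(m*n)) ^ N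
      ≤ (1 - x) ^ N := by
        have := pow_nonneg hb0 N
        rw [← hx]
        linarith
    _ ≤ (Real.exp (-x)) ^ N := by
        apply pow_le_pow_left₀ (by linarith) _ N
        have := Real.add_one_le_exp (-x)
        linarith
    _ = Real.exp (N * (-x)) := (Real.exp_nat_mul _ N).symm
    _ ≤ Real.exp (-((1/2:ℝ) * μ)) := by
        apply Real.exp_le_exp.mpr
        nlinarith [hxN]
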